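/- For every n ≥ 0, the polynomial identity ∑_{k=0}^{⌊n/2⌋} C_k · binomial(n, 2k) · x^k (1+x)^{n−2k} = ∑_{k=0}^n (1/(n+1)) · binomial(n+1, k) · binomial(n+1, k+1) · x^k holds, where C_k is the k-th Catalan number. -/

import Mathlib

open Polynomial Finset Nat

-- subset-of-subset identity
lemma chooseL (n r j : ℕ) (h : j ≤ r) :
    n.choose r * r.choose j = n.choose j * (n - j).choose (r - j) := by
  rcases le_or_gt r n with hr | hr
  · have hj : j ≤ n := h.trans hr
    apply Nat.eq_of_mul_eq_mul_right (Nat.factorial_pos j)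
    apply Nat.eq_of_mul_eq_mul_right (Nat.factorial_pos (r - j))
    apply Nat.eq_of_mul_eq_mul_right (Nat.factorial_pos (n - r))
    have e1 : n.choose r * r.choose j * j ! * (r - j)! * (n - r)!
        = n.choose r * (r.choose j * j ! * (r - j)!) * (n - r)! := by ring
    have e2 : n.choose j * (n - j).choose (r - j) * j ! * (r - j)! * (n - r)!
        = n.choose j * j ! * ((n - j).choose (r - j) * (r - j)! * (n - r)!) := by ring
    rw [e1, Nat.choose_mul_factorial_mul_factorial h, e2]
    have h3 : (n - j) - (r - j) = n - r := by omega
    have h4 : r - j ≤ n - j := by omega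
    calc n.choose r * r ! * (n - r)!
        = n ! := Nat.choose_mul_factorial_mul_factorial hr
      _ = n.choose j * j ! * (n - j)! := (Nat.choose_mul_factorial_mul_factorial hj).symm
      _ = n.choose j * j ! * ((n - j).choose (r - j) * (r - j)! * ((n-j)-(r-j))!) := by
            rw [Nat.choose_mul_factorial_mul_factorial h4]
      _ = n.choose j * j ! * ((n - j).choose (r - j) * (r - j)! * (n - r)!) := by rw [h3]
  · rw [Nat.choose_eq_zero_of_lt hr, Nat.zero_mul]
    rcases le_or_gt j n with hj | hj
    · rw [Nat.choose_eq_zero_of_lt (show n - j < r - j by omega), Nat.mul_zero]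
    · rw [Nat.choose_eq_zero_of_lt hj, Nat.zero_mul]

lemma chooseD (N a b : ℕ) :
    N.choose a * (N - a).choose b = N.choose (a + b) * (a + b).choose a := by
  have := chooseL N (a + b) a (Nat.le_add_right a b)
  rw [Nat.add_sub_cancel_left] at this
  omega

lemma chooseSW (N a b : ℕ) :
    N.choose a * (N - a).choose b = N.choose b * (N - b).choose a := by
  rw [chooseD, chooseD, Nat.add_comm b a, Nat.choose_symm_add]

lemma vdm (x y s : ℕ) :
    ∑ k ∈ range (s + 1), x.choose k * y.choose (s - k) = (x + y).choose s := by
  rw [Nat.add_choose_eq, Finset.Nat.sum_antidiagonal_eq_sum_range_succ_mk]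

lemma H1 (a b : ℕ) :
    ∑ k ∈ range (b + 1), a.choose k * b.choose k = (a + b).choose b := by
  rw [← vdm a b b]
  refine Finset.sum_congr rfl fun k hk => ?_
  rw [Finset.mem_range] at hk
  rw [← Nat.choose_symm (by omega : k ≤ b)]

lemma H2 (a s : ℕ) :
    ∑ j ∈ range (s + 1), (s + 2).choose (j + 2) * a.choose j = (s + 2 + a).choose s := by
  rw [← Finset.sum_range_reflect]
  rw [← vdm (s + 2) a s]
  refine Finset.sum_congr rfl fun j hj => ?_
  rw [Finset.mem_range] at hj
  rw [show s + 1 - 1 - j = s - j by omega, show s - j + 2 = (s + 2) - j by omega,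
    Nat.choose_symm (by omega : j ≤ s + 2)]

lemma catalan_eq_sub (k : ℕ) :
    catalan k = (2 * k).choose k - (2 * k).choose (k + 1) := by
  have h := Nat.choose_succ_right_eq (2 * k) k
  rw [show 2 * k - k = k by omega] at h
  have h2 : (k + 1) * catalan k = (2 * k).choose k := by
    rw [succ_mul_catalan_eq_centralBinom, Nat.centralBinom_eq_two_mul_choose]
  have hle : (2 * k).choose (k + 1) ≤ (2 * k).choose k := by
    have := Nat.choose_le_middle (k + 1) (2 * k)
    rwa [Nat.mul_div_cancel_left k (by norm_num)] at this
  have key : (k + 1) * (catalan k + (2 * k).choose (k + 1))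
      = (k + 1) * (2 * k).choose k := by
    rw [Nat.mul_add, h2]
    calc (2 * k).choose k + (k + 1) * (2 * k).choose (k + 1)
        = (2 * k).choose k + (2 * k).choose (k + 1) * (k + 1) := by ring
      _ = (2 * k).choose k + (2 * k).choose k * k := by rw [h]
      _ = (k + 1) * (2 * k).choose k := by ring
  have := Nat.eq_of_mul_eq_mul_left (Nat.succ_pos k) key
  omega

lemma T1 (n m : ℕ) (h : m ≤ n) :
    ∑ k ∈ range (m + 1), (2 * k).choose k * (n.choose (2 * k) * (n - 2 * k).choose (m - k))
      = n.choose m ^ 2 := by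
  have step : ∀ k ∈ range (m + 1),
      (2 * k).choose k * (n.choose (2 * k) * (n - 2 * k).choose (m - k))
        = n.choose m * ((n - m).choose k * m.choose k) := by
    intro k hk
    rw [Finset.mem_range] at hk
    have hkm : k ≤ m := by omega
    have e1 : n.choose (2 * k) * (2 * k).choose k = n.choose k * (n - k).choose k := by
      have := chooseL n (2 * k) k (by omega)
      rwa [show 2 * k - k = k by omega] at this
    have e2 : (n - k).choose k * (n - 2 * k).choose (m - k)
        = (n - k).choose m * m.choose k := by
      have := chooseD (n - k) k (m - k)
      rwa [show n - k - k = n - 2 * k by omega, show k + (m - k) = m by omega] at this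
    have e3 : n.choose k * (n - k).choose m = n.choose m * (n - m).choose k := chooseSW n k m
    calc (2 * k).choose k * (n.choose (2 * k) * (n - 2 * k).choose (m - k))
        = (n.choose (2 * k) * (2 * k).choose k) * (n - 2 * k).choose (m - k) := by ring
      _ = (n.choose k * (n - k).choose k) * (n - 2 * k).choose (m - k) := by rw [e1]
      _ = n.choose k * ((n - k).choose k * (n - 2 * k).choose (m - k)) := by ring
      _ = n.choose k * ((n - k).choose m * m.choose k) := by rw [e2]
      _ = (n.choose k * (n - k).choose m) * m.choose k := by ring
      _ = (n.choose m * (n - m).choose k) * m.choose k := by rw [e3]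
      _ = n.choose m * ((n - m).choose k * m.choose k) := by ring
  rw [Finset.sum_congr rfl step, ← Finset.mul_sum, H1 (n - m) m,
    show n - m + m = n by omega, sq]

lemma T2 (n m : ℕ) (hm : 1 ≤ m) (h : m ≤ n) :
    ∑ k ∈ range (m + 1), (2 * k).choose (k + 1) * (n.choose (2 * k) * (n - 2 * k).choose (m - k))
      = n.choose (m - 1) * n.choose (m + 1) := by
  have step : ∀ j ∈ range m,
      (2 * (j + 1)).choose (j + 1 + 1)
          * (n.choose (2 * (j + 1)) * (n - 2 * (j + 1)).choose (m - (j + 1)))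
        = n.choose (m + 1) * ((m + 1).choose (j + 2) * (n - m - 1).choose j) := by
    intro j hj
    rw [Finset.mem_range] at hj
    have e1 : n.choose (2 * (j + 1)) * (2 * (j + 1)).choose (j + 2)
        = n.choose (j + 2) * (n - (j + 2)).choose j := by
      have := chooseL n (2 * (j + 1)) (j + 2) (by omega)
      rwa [show 2 * (j + 1) - (j + 2) = j by omega] at this
    have e2 : (n - (j + 2)).choose j * (n - 2 * (j + 1)).choose (m - (j + 1))
        = (n - (j + 2)).choose (m - (j + 1)) * (n - m - 1).choose j := by
      have := chooseSW (n - (j + 2)) j (m - (j + 1))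
      rwa [show n - (j + 2) - j = n - 2 * (j + 1) by omega,
        show n - (j + 2) - (m - (j + 1)) = n - m - 1 by omega] at this
    have e3 : n.choose (j + 2) * (n - (j + 2)).choose (m - (j + 1))
        = n.choose (m + 1) * (m + 1).choose (j + 2) := by
      have := chooseD n (j + 2) (m - (j + 1))
      rwa [show j + 2 + (m - (j + 1)) = m + 1 by omega] at this
    calc (2 * (j + 1)).choose (j + 1 + 1)
          * (n.choose (2 * (j + 1)) * (n - 2 * (j + 1)).choose (m - (j + 1)))
        = (n.choose (2 * (j + 1)) * (2 * (j + 1)).choose (j + 2))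
            * (n - 2 * (j + 1)).choose (m - (j + 1)) := by ring
      _ = (n.choose (j + 2) * (n - (j + 2)).choose j)
            * (n - 2 * (j + 1)).choose (m - (j + 1)) := by rw [e1]
      _ = n.choose (j + 2)
            * ((n - (j + 2)).choose j * (n - 2 * (j + 1)).choose (m - (j + 1))) := by ring
      _ = n.choose (j + 2)
            * ((n - (j + 2)).choose (m - (j + 1)) * (n - m - 1).choose j) := by rw [e2]
      _ = (n.choose (j + 2) * (n - (j + 2)).choose (m - (j + 1))) * (n - m - 1).choose j := by
            ring
      _ = (n.choose (m + 1) * (m + 1).choose (j + 2)) * (n - m - 1).choose j := by rw [e3]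
      _ = n.choose (m + 1) * ((m + 1).choose (j + 2) * (n - m - 1).choose j) := by ring
  rw [Finset.sum_range_succ']
  simp only [Nat.mul_zero, Nat.choose_succ_self, Nat.zero_mul, Nat.add_zero]
  rw [Finset.sum_congr rfl step, ← Finset.mul_sum]
  rcases Nat.eq_or_lt_of_le h with rfl | hlt
  · rw [Nat.choose_succ_self, Nat.mul_zero, Nat.zero_mul]
  · have := H2 (n - m - 1) (m - 1)
    rw [show m - 1 + 2 + (n - m - 1) = n by omega, show m - 1 + 1 = m by omega,
      show m - 1 + 2 = m + 1 by omega] at this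
    rw [this, Nat.mul_comm]

lemma NATKEY (n m : ℕ) (hm : 1 ≤ m) (h : m ≤ n) :
    (∑ k ∈ range (m + 1), catalan k * (n.choose (2 * k) * (n - 2 * k).choose (m - k)))
      + n.choose (m - 1) * n.choose (m + 1) = n.choose m ^ 2 := by
  have split : (∑ k ∈ range (m + 1), catalan k * (n.choose (2 * k) * (n - 2 * k).choose (m - k)))
      + (∑ k ∈ range (m + 1),
          (2 * k).choose (k + 1) * (n.choose (2 * k) * (n - 2 * k).choose (m - k)))
      = ∑ k ∈ range (m + 1), (2 * k).choose k * (n.choose (2 * k) * (n - 2 * k).choose (m - k)) := by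
    rw [← Finset.sum_add_distrib]
    refine Finset.sum_congr rfl fun k _ => ?_
    have hc := catalan_eq_sub k
    have hle : (2 * k).choose (k + 1) ≤ (2 * k).choose k := by
      have := Nat.choose_le_middle (k + 1) (2 * k)
      rwa [Nat.mul_div_cancel_left k (by norm_num)] at this
    rw [← Nat.add_mul, show catalan k + (2 * k).choose (k + 1) = (2 * k).choose k by omega]
  have t1 := T1 n m h
  have t2 := T2 n m hm h
  omega

lemma REALKEY (n m : ℕ) (hm : 1 ≤ m) (h : m ≤ n) :
    ((n.choose m : ℝ) ^ 2 - n.choose (m - 1) * n.choose (m + 1))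
      = ((n : ℝ) + 1)⁻¹ * (n + 1).choose m * (n + 1).choose (m + 1) := by
  obtain ⟨a, rfl⟩ : ∃ a, m = a + 1 := ⟨m - 1, by omega⟩
  rw [show a + 1 - 1 = a by omega]
  set A : ℝ := (n.choose (a + 1) : ℝ)
  set B : ℝ := (n.choose a : ℝ)
  set D : ℝ := (n.choose (a + 2) : ℝ)
  set E : ℝ := ((n + 1).choose (a + 1) : ℝ)
  set F : ℝ := ((n + 1).choose (a + 2) : ℝ)
  have h1 : F * ((a : ℝ) + 2) = ((n : ℝ) + 1) * A := by
    have := congrArg (Nat.cast (R := ℝ)) (Nat.add_one_mul_choose_eq n (a + 1))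
    push_cast at this
    linarith
  have h2 : D * ((a : ℝ) + 2) = A * ((n : ℝ) - (a + 1)) := by
    have := congrArg (Nat.cast (R := ℝ)) (Nat.choose_succ_right_eq n (a + 1))
    rw [Nat.cast_mul, Nat.cast_mul, Nat.cast_sub h] at this
    push_cast at this
    linarith
  have h3 : A * ((a : ℝ) + 1) = B * ((n : ℝ) - a) := by
    have := congrArg (Nat.cast (R := ℝ)) (Nat.choose_succ_right_eq n a)
    rw [Nat.cast_mul, Nat.cast_mul, Nat.cast_sub (by omega : a ≤ n)] at this
    push_cast at this
    linarith
  have h4 : E * ((a : ℝ) + 1) = ((n : ℝ) + 1) * B := by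
    have := congrArg (Nat.cast (R := ℝ)) (Nat.add_one_mul_choose_eq n a)
    push_cast at this
    linarith
  have hne : ((n : ℝ) + 1) ≠ 0 := by positivity
  have hme : ((a : ℝ) + 1) ≠ 0 := by positivity
  have hm1 : ((a : ℝ) + 2) ≠ 0 := by positivity
  rw [inv_mul_eq_div, div_mul_eq_mul_div, eq_div_iff hne]
  apply mul_left_cancel₀ hme
  apply mul_left_cancel₀ hm1
  linear_combination (((n : ℝ) + 1) * A * ((a : ℝ) + 2)) * h3
    - (((n : ℝ) + 1) * B * ((a : ℝ) + 1)) * h2 - (F * ((a : ℝ) + 2)) * h4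
    - (((n : ℝ) + 1) * B) * h1

theorem catalan_narayana_identity (n : ℕ) :
    ∑ k ∈ Finset.range (n / 2 + 1),
        Polynomial.C ((catalan k : ℝ) * (n.choose (2 * k) : ℝ)) *
          Polynomial.X ^ k * (1 + Polynomial.X) ^ (n - 2 * k)
      = ∑ k ∈ Finset.range (n + 1),
          Polynomial.C (((n : ℝ) + 1)⁻¹ * ((n + 1).choose k : ℝ)
            * ((n + 1).choose (k + 1) : ℝ)) * Polynomial.X ^ k := by
  apply Polynomial.ext
  intro m
  rw [Polynomial.finset_sum_coeff, Polynomial.finset_sum_coeff]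
  have hL : ∀ k ∈ range (n / 2 + 1),
      (Polynomial.C ((catalan k : ℝ) * (n.choose (2 * k) : ℝ)) *
          Polynomial.X ^ k * (1 + Polynomial.X) ^ (n - 2 * k)).coeff m
        = if k ≤ m then
            (catalan k : ℝ) * (n.choose (2 * k) : ℝ) * ((n - 2 * k).choose (m - k) : ℝ)
          else 0 := by
    intro k _
    rw [mul_right_comm, Polynomial.coeff_mul_X_pow', Polynomial.coeff_C_mul,
      Polynomial.coeff_one_add_X_pow]
  have hR : ∀ k ∈ range (n + 1),
      (Polynomial.C (((n : ℝ) + 1)⁻¹ * ((n + 1).choose k : ℝ)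
            * ((n + 1).choose (k + 1) : ℝ)) * Polynomial.X ^ k).coeff m
        = if m = k then
            ((n : ℝ) + 1)⁻¹ * ((n + 1).choose k : ℝ) * ((n + 1).choose (k + 1) : ℝ)
          else 0 := by
    intro k _
    rw [Polynomial.coeff_C_mul_X_pow]
  rw [Finset.sum_congr rfl hL, Finset.sum_congr rfl hR, Finset.sum_ite_eq]
  simp only [Finset.mem_range]
  by_cases hmn : m ≤ n
  · rw [if_pos (by omega)]
    rcases Nat.eq_zero_or_pos m with rfl | hm
    · rw [Finset.sum_eq_single_of_mem 0 (Finset.mem_range.2 (by omega))]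
      · simp [Nat.choose_one_right]
        rw [inv_mul_cancel₀ (by positivity : ((n : ℝ) + 1) ≠ 0)]
      · intro k _ hk
        rw [if_neg (by omega)]
    · -- reindex the sum to range (m+1)
      have e1 : ∑ k ∈ range (n / 2 + 1), (if k ≤ m then
            (catalan k : ℝ) * (n.choose (2 * k) : ℝ) * ((n - 2 * k).choose (m - k) : ℝ)
          else 0)
          = ∑ k ∈ range (n + 1), (if k ≤ m then
            (catalan k : ℝ) * (n.choose (2 * k) : ℝ) * ((n - 2 * k).choose (m - k) : ℝ)
          else 0) := by
        apply Finset.sum_subset (Finset.range_subset_range.2 (by omega))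
        intro k hk hk2
        rw [Finset.mem_range] at hk hk2
        rw [Nat.choose_eq_zero_of_lt (show n < 2 * k by omega)]
        simp
      have e2 : ∑ k ∈ range (n + 1), (if k ≤ m then
            (catalan k : ℝ) * (n.choose (2 * k) : ℝ) * ((n - 2 * k).choose (m - k) : ℝ)
          else 0)
          = ∑ k ∈ range (m + 1),
            (catalan k : ℝ) * (n.choose (2 * k) : ℝ) * ((n - 2 * k).choose (m - k) : ℝ) := by
        rw [← Finset.sum_subset (Finset.range_subset_range.2 (by omega : m + 1 ≤ n + 1))
          (fun k hk hk2 => by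
            rw [Finset.mem_range] at hk hk2
            exact if_neg (by omega))]
        exact Finset.sum_congr rfl fun k hk => if_pos (by
          rw [Finset.mem_range] at hk; omega)
      rw [e1, e2]
      have hnat := NATKEY n m hm hmn
      have hcast : (∑ k ∈ range (m + 1),
            (catalan k : ℝ) * (n.choose (2 * k) : ℝ) * ((n - 2 * k).choose (m - k) : ℝ))
          = (n.choose m : ℝ) ^ 2 - (n.choose (m - 1) : ℝ) * (n.choose (m + 1) : ℝ) := by
        have := congrArg (Nat.cast (R := ℝ)) hnat
        push_cast at this
        rw [← this]
        ring_nf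
      rw [hcast]
      exact REALKEY n m hm hmn
  · rw [if_neg (by omega)]
    apply Finset.sum_eq_zero
    intro k hk
    rw [Finset.mem_range] at hk
    split_ifs with hkm
    · rw [Nat.choose_eq_zero_of_lt (show n - 2 * k < m - k by omega)]
      simp
    · rfl
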